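/- Let f : ℕ → [0,∞) with f(0) > f(k) for k ≥ 1, a > 0, and let (y_k(f)) be the solution to the recurrence y_0 = 1, y_k = (1/(f(0)−f(k))) ∑_{j=0}^{k−1} y_j f(j) a^{k−j}/(k−j)!. For j ≥ 0 define the shifted fitness f^{(j)}(0) = f(0), f^{(j)}(i) = f(i+j) for i ≥ 1. Then for all k ≥ 2: y_k(f) = (a^k/k!)·f(0)/(f(0)−f(k)) + ∑_{j=1}^{k−1} (a^j/j!)·(f(j)/(f(0)−f(j)))·y_{k−j}(f^{(j)}). -/

import Mathlib

open Finset

/-- The fitness landscape obtained from `f` by keeping the class-0 fitness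
    and shifting all other fitnesses `j` places to the left. -/
def shift (f : ℕ → ℝ) (j : ℕ) : ℕ → ℝ :=
  fun i => if i = 0 then f 0 else f (i + j)

lemma shift_zero (f : ℕ → ℝ) (j : ℕ) : shift f j 0 = f 0 := by simp [shift]

lemma shift_pos (f : ℕ → ℝ) (j m : ℕ) (hm : m ≠ 0) : shift f j m = f (m + j) := by
  simp [shift, hm]

lemma shift_hyp (f : ℕ → ℝ) (hf : ∀ k, 1 ≤ k → f k < f 0) (j : ℕ) :
    ∀ k, 1 ≤ k → shift f j k < shift f j 0 := by
  intro k hk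
  rw [shift_zero, shift_pos f j k (by omega)]
  exact hf _ (by omega)

lemma double_reindex (k : ℕ) (F : ℕ → ℕ → ℝ) :
    ∑ m ∈ Ioo 0 k, ∑ j ∈ Ioo 0 m, F j (m - j) =
    ∑ j ∈ Ioo 0 k, ∑ i ∈ Ioo 0 (k - j), F j i := by
  rw [Finset.sum_sigma', Finset.sum_sigma']
  refine Finset.sum_nbij'
      (fun x : (_ : ℕ) × ℕ => ((⟨x.2, x.1 - x.2⟩ : (_ : ℕ) × ℕ)))
      (fun x : (_ : ℕ) × ℕ => ((⟨x.2 + x.1, x.1⟩ : (_ : ℕ) × ℕ))) ?_ ?_ ?_ ?_ ?_ <;>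
    simp only [Finset.mem_Ioo, Sigma.forall, Finset.mem_sigma, Sigma.mk.inj_iff,
      heq_eq_eq] <;>
    rintro a b ⟨⟨h₁, h₂⟩, h₃, h₄⟩
  · omega
  · omega
  · exact ⟨by omega, trivial⟩
  · exact ⟨trivial, by omega⟩
  · trivial

lemma key_lemma
    (a : ℝ)
    (Y : (ℕ → ℝ) → ℕ → ℝ)
    (hY0 : ∀ φ : ℕ → ℝ, (∀ k, 1 ≤ k → φ k < φ 0) → Y φ 0 = 1)
    (hY : ∀ φ : ℕ → ℝ, (∀ k, 1 ≤ k → φ k < φ 0) → ∀ k, 1 ≤ k →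
      Y φ k = (1 / (φ 0 - φ k)) *
        ∑ j ∈ Finset.range k, Y φ j * φ j * a ^ (k - j) / (Nat.factorial (k - j))) :
    ∀ k, ∀ f : ℕ → ℝ, (∀ m, 1 ≤ m → f m < f 0) → 1 ≤ k →
      Y f k = a ^ k / (Nat.factorial k) * (f 0 / (f 0 - f k)) +
        ∑ j ∈ Finset.Ioo 0 k,
          a ^ j / (Nat.factorial j) * (f j / (f 0 - f j)) * Y (shift f j) (k - j) := by
  intro k
  induction k using Nat.strong_induction_on with
  | _ k IH =>
    intro f hf hk
    rw [hY f hf k hk]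
    -- recurrence for the shifted landscapes
    have hz : ∀ j ∈ Finset.Ioo 0 k, Y (shift f j) (k - j) =
        (1 / (f 0 - f k)) * ∑ i ∈ Finset.range (k - j),
          Y (shift f j) i * shift f j i * a ^ (k - j - i) /
            (Nat.factorial (k - j - i)) := by
      intro j hj
      obtain ⟨hj0, hjk⟩ := Finset.mem_Ioo.mp hj
      have h1 : 1 ≤ k - j := by omega
      rw [hY (shift f j) (shift_hyp f hf j) (k - j) h1, shift_zero,
        shift_pos f j (k - j) (by omega), Nat.sub_add_cancel hjk.le]
    -- main summation identity
    have hmain : ∑ m ∈ Finset.range k, Y f m * f m * a ^ (k - m) / (Nat.factorial (k - m))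
        = a ^ k / (Nat.factorial k) * f 0 +
          ∑ j ∈ Finset.Ioo 0 k, (a ^ j / (Nat.factorial j) * (f j / (f 0 - f j))) *
            (∑ i ∈ Finset.range (k - j),
              Y (shift f j) i * shift f j i * a ^ (k - j - i) /
                (Nat.factorial (k - j - i))) := by
      -- expand the left sum: pull off m = 0, expand Y f m by IH for m ≥ 1
      have e0 : ∑ m ∈ Finset.range k, Y f m * f m * a ^ (k - m) / (Nat.factorial (k - m))
          = a ^ k / (Nat.factorial k) * f 0 +
            ∑ m ∈ Finset.Ioo 0 k, Y f m * f m * a ^ (k - m) / (Nat.factorial (k - m)) := by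
        rw [Finset.range_eq_Ico, Finset.sum_eq_sum_Ico_succ_bot (by omega : 0 < k),
          Finset.Ico_add_one_left_eq_Ioo, hY0 f hf]
        congr 1
        simp
        ring
      rw [e0]
      congr 1
      -- expand the right sums: pull off i = 0
      have eW : ∀ j ∈ Finset.Ioo 0 k,
          (a ^ j / (Nat.factorial j) * (f j / (f 0 - f j))) *
            (∑ i ∈ Finset.range (k - j),
              Y (shift f j) i * shift f j i * a ^ (k - j - i) /
                (Nat.factorial (k - j - i)))
          = (a ^ j / (Nat.factorial j) * (f j / (f 0 - f j))) *
              (f 0 * a ^ (k - j) / (Nat.factorial (k - j))) +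
            ∑ i ∈ Finset.Ioo 0 (k - j),
              (a ^ j / (Nat.factorial j) * (f j / (f 0 - f j))) *
                (Y (shift f j) i * f (i + j) * a ^ (k - j - i) /
                  (Nat.factorial (k - j - i))) := by
        intro j hj
        obtain ⟨hj0, hjk⟩ := Finset.mem_Ioo.mp hj
        have e1 : ∑ i ∈ Finset.range (k - j),
            Y (shift f j) i * shift f j i * a ^ (k - j - i) /
              (Nat.factorial (k - j - i))
            = f 0 * a ^ (k - j) / (Nat.factorial (k - j)) +
              ∑ i ∈ Finset.Ioo 0 (k - j),
                Y (shift f j) i * f (i + j) * a ^ (k - j - i) /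
                  (Nat.factorial (k - j - i)) := by
          rw [Finset.range_eq_Ico,
            Finset.sum_eq_sum_Ico_succ_bot (by omega : 0 < k - j),
            Finset.Ico_add_one_left_eq_Ioo, hY0 (shift f j) (shift_hyp f hf j), shift_zero]
          congr 1
          · simp
          · refine Finset.sum_congr rfl fun i hi => ?_
            obtain ⟨hi0, _⟩ := Finset.mem_Ioo.mp hi
            rw [shift_pos f j i (by omega)]
        rw [e1, mul_add, Finset.mul_sum]
      rw [Finset.sum_congr rfl eW, Finset.sum_add_distrib]
      -- expand Y f m by the induction hypothesis
      have e2 : ∀ m ∈ Finset.Ioo 0 k,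
          Y f m * f m * a ^ (k - m) / (Nat.factorial (k - m))
          = (a ^ m / (Nat.factorial m) * (f 0 / (f 0 - f m))) *
              (f m * a ^ (k - m) / (Nat.factorial (k - m))) +
            ∑ j ∈ Finset.Ioo 0 m,
              (a ^ j / (Nat.factorial j) * (f j / (f 0 - f j))) *
                (Y (shift f j) (m - j) * f m * a ^ (k - m) /
                  (Nat.factorial (k - m))) := by
        intro m hm
        obtain ⟨hm0, hmk⟩ := Finset.mem_Ioo.mp hm
        rw [IH m hmk f hf hm0, add_mul, add_mul, add_div, Finset.sum_mul,
          Finset.sum_mul, Finset.sum_div]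
        congr 1
        · ring
        · exact Finset.sum_congr rfl fun j _ => by ring
      rw [Finset.sum_congr rfl e2, Finset.sum_add_distrib]
      congr 1
      · refine Finset.sum_congr rfl fun m hm => ?_
        ring
      · -- the double-sum reindexing
        have hdr := double_reindex k (fun j i =>
          (a ^ j / (Nat.factorial j) * (f j / (f 0 - f j))) *
            (Y (shift f j) i * f (i + j) * a ^ (k - j - i) /
              (Nat.factorial (k - j - i))))
        rw [← hdr]
        refine Finset.sum_congr rfl fun m hm => Finset.sum_congr rfl fun j hj => ?_
        obtain ⟨hm0, hmk⟩ := Finset.mem_Ioo.mp hm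
        obtain ⟨hj0, hjm⟩ := Finset.mem_Ioo.mp hj
        rw [show m - j + j = m from by omega,
          show k - j - (m - j) = k - m from by omega]
    rw [hmain, mul_add, Finset.mul_sum]
    congr 1
    · ring
    · refine Finset.sum_congr rfl fun j hj => ?_
      rw [hz j hj]
      ring

theorem shift_decomposition
    (f : ℕ → ℝ) (hf0 : ∀ k, 0 ≤ f k) (hf : ∀ k, 1 ≤ k → f k < f 0)
    (a : ℝ) (ha : 0 < a)
    (Y : (ℕ → ℝ) → ℕ → ℝ)
    (hY0 : ∀ φ : ℕ → ℝ, (∀ k, 1 ≤ k → φ k < φ 0) → Y φ 0 = 1)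
    (hY : ∀ φ : ℕ → ℝ, (∀ k, 1 ≤ k → φ k < φ 0) → ∀ k, 1 ≤ k →
      Y φ k = (1 / (φ 0 - φ k)) *
        ∑ j ∈ Finset.range k, Y φ j * φ j * a ^ (k - j) / (Nat.factorial (k - j))) :
    ∀ k, 2 ≤ k →
      Y f k = a ^ k / (Nat.factorial k) * (f 0 / (f 0 - f k)) +
        ∑ j ∈ Finset.Ioo 0 k,
          a ^ j / (Nat.factorial j) * (f j / (f 0 - f j)) * Y (shift f j) (k - j) := by
  intro k hk
  exact key_lemma a Y hY0 hY k f hf (by omega)
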